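/- arXiv:1909.06322 — 2 statements merged into one kernel-verified Lean document; each statement's English description precedes it below -/
import Mathlib

section
/- Suppose f, g : ℝ^d → ℝ are differentiable, f is λ-strongly convex, and ‖∇f(θ) - ∇g(θ)‖_∞ ≤ γ/n for all θ, where the difference ∇f(θ) - ∇g(θ) is supported on a set of at most 2s coordinates for every θ. If θ_f and θ_g are the global minimizers of f and g respectively, then ‖θ_f - θ_g‖₂ ≤ √(2s)·γ/(nλ). -/
open scoped RealInnerProductSpace
open Finset

theorem gradient_eq_zero_of_isMinOn' {d : ℕ} {f : EuclideanSpace ℝ (Fin d) → ℝ}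
    {a : EuclideanSpace ℝ (Fin d)} (h : ∀ θ, f a ≤ f θ) : gradient f a = 0 := by
  have hmin : IsLocalMin f a := Filter.Eventually.of_forall h
  rw [gradient, hmin.fderiv_eq_zero, map_zero]

/-- Sensitivity bound combining strong convexity with a sparse `ℓ_∞` gradient
difference bound: `‖θ_f - θ_g‖₂ ≤ √(2s)·γ/(nλ)`. -/
theorem stmt_3 {d : ℕ} (s : ℕ) (lam γ n : ℝ) (hlam : 0 < lam) (hn : 0 < n)
    (hγ : 0 ≤ γ)
    (f g : EuclideanSpace ℝ (Fin d) → ℝ)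
    (hf : Differentiable ℝ f) (hg : Differentiable ℝ g)
    (hsc : ∀ θ₁ θ₂ : EuclideanSpace ℝ (Fin d),
      f θ₁ - f θ₂ - ⟪gradient f θ₂, θ₁ - θ₂⟫ ≥ lam / 2 * ‖θ₁ - θ₂‖ ^ 2)
    (hinf : ∀ θ : EuclideanSpace ℝ (Fin d), ∀ i,
      |gradient f θ i - gradient g θ i| ≤ γ / n)
    (hsupp : ∀ θ : EuclideanSpace ℝ (Fin d),
      (Finset.univ.filter (fun i => gradient f θ i - gradient g θ i ≠ 0)).card ≤ 2 * s)
    (θf θg : EuclideanSpace ℝ (Fin d))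
    (hminf : ∀ θ, f θf ≤ f θ) (hming : ∀ θ, g θg ≤ g θ) :
    ‖θf - θg‖ ≤ Real.sqrt (2 * s) * γ / (n * lam) := by
  have hgf : gradient f θf = 0 := gradient_eq_zero_of_isMinOn' hminf
  have hgg : gradient g θg = 0 := gradient_eq_zero_of_isMinOn' hming
  set v : EuclideanSpace ℝ (Fin d) := gradient f θg with hv
  -- v i = gradient f θg i - gradient g θg i
  have hvi : ∀ i, v i = gradient f θg i - gradient g θg i := by
    intro i; rw [hgg]; simp [hv]
  -- norm bound on v
  have hvnorm : ‖v‖ ≤ Real.sqrt (2 * s) * (γ / n) := by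
    have hγn : 0 ≤ γ / n := div_nonneg hγ hn.le
    have h1 : ‖v‖ ^ 2 ≤ (2 * s) * (γ / n) ^ 2 := by
      rw [EuclideanSpace.norm_eq, Real.sq_sqrt (by positivity)]
      set S := Finset.univ.filter (fun i => gradient f θg i - gradient g θg i ≠ 0)
      have : ∑ i, v i ^ 2 = ∑ i ∈ S, v i ^ 2 := by
        refine (Finset.sum_subset (Finset.subset_univ S) ?_).symm
        intro i _ hi
        simp only [Finset.mem_filter, Finset.mem_univ, true_and, S, not_not] at hi
        rw [hvi i, hi]; ring
      calc ∑ i, ‖v i‖ ^ 2 = ∑ i ∈ S, v i ^ 2 := by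
            simp only [Real.norm_eq_abs, sq_abs]; exact this
        _ ≤ ∑ _i ∈ S, (γ / n) ^ 2 := by
            apply Finset.sum_le_sum
            intro i _
            have := hinf θg i
            rw [← hvi i] at this
            calc v i ^ 2 = |v i| ^ 2 := (sq_abs _).symm
              _ ≤ (γ / n) ^ 2 := by
                  apply pow_le_pow_left₀ (abs_nonneg _) this
        _ = S.card * (γ / n) ^ 2 := by rw [Finset.sum_const, nsmul_eq_mul]
        _ ≤ (2 * s) * (γ / n) ^ 2 := by
            apply mul_le_mul_of_nonneg_right _ (by positivity)
            have hS : S.card ≤ 2 * s := hsupp θg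
            exact_mod_cast hS
    calc ‖v‖ = Real.sqrt (‖v‖ ^ 2) := by rw [Real.sqrt_sq (norm_nonneg _)]
      _ ≤ Real.sqrt ((2 * s) * (γ / n) ^ 2) := Real.sqrt_le_sqrt h1
      _ = Real.sqrt (2 * s) * (γ / n) := by
          rw [Real.sqrt_mul (by positivity), Real.sqrt_sq hγn]
  -- strong convexity inequalities
  have h1 := hsc θg θf
  have h2 := hsc θf θg
  rw [hgf] at h1
  simp only [inner_zero_left] at h1
  have key : ⟪v, θg - θf⟫ ≥ lam * ‖θf - θg‖ ^ 2 := by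
    have hnormsym : ‖θg - θf‖ = ‖θf - θg‖ := norm_sub_rev _ _
    rw [hnormsym] at h1
    have hsign : (⟪v, θg - θf⟫ : ℝ) = -⟪v, θf - θg⟫ := by
      rw [← inner_neg_right, neg_sub]
    rw [hsign]
    have h2' : f θf - f θg - ⟪v, θf - θg⟫ ≥ lam / 2 * ‖θf - θg‖ ^ 2 := h2
    linarith
  have hcs : ⟪v, θg - θf⟫ ≤ ‖v‖ * ‖θf - θg‖ := by
    calc ⟪v, θg - θf⟫ ≤ ‖v‖ * ‖θg - θf‖ := real_inner_le_norm _ _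
      _ = ‖v‖ * ‖θf - θg‖ := by rw [norm_sub_rev]
  have hfinal : lam * ‖θf - θg‖ ^ 2 ≤ (Real.sqrt (2 * s) * (γ / n)) * ‖θf - θg‖ := by
    calc lam * ‖θf - θg‖ ^ 2 ≤ ⟪v, θg - θf⟫ := key
      _ ≤ ‖v‖ * ‖θf - θg‖ := hcs
      _ ≤ (Real.sqrt (2 * s) * (γ / n)) * ‖θf - θg‖ :=
          mul_le_mul_of_nonneg_right hvnorm (norm_nonneg _)
  rcases eq_or_lt_of_le (norm_nonneg (θf - θg)) with h | h
  · rw [← h]; positivity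
  · have hR : lam * ‖θf - θg‖ ≤ Real.sqrt (2 * s) * (γ / n) :=
      le_of_mul_le_mul_right (by nlinarith [hfinal]) h
    have heq : Real.sqrt (2 * s) * (γ / n) / lam = Real.sqrt (2 * s) * γ / (n * lam) := by
      field_simp
    have : ‖θf - θg‖ ≤ Real.sqrt (2 * s) * (γ / n) / lam :=
      (le_div_iff₀ hlam).mpr (by linarith)
    linarith [heq ▸ this]
end

section
/- Let θ* ∈ ℝ^d with ‖θ*‖₀ ≤ s*, let θ̃ ∈ ℝ^d, and let s > s*. Then the hard-thresholded vector θ = H_s(θ̃) satisfies ‖θ - θ*‖₂² ≤ (1 + 2√(s*)/√(s - s*)) · ‖θ̃ - θ*‖₂². -/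
open Finset

/-- Polynomial core of the contraction bound. -/
lemma ht_poly_aux (p q a w x y : ℝ) (hp : 0 < p) (hq : 1 ≤ q)
    (hw : 0 ≤ w) (hx : 0 ≤ x) (hy : 0 ≤ y) (ha : 0 ≤ a) (haq : a ≤ q^2)
    (hUY : w^2 * (p^2 + a) ≤ a * y^2) :
    p * w^2 + 2 * p * w * x ≤ 2 * q * (x^2 + y^2) := by
  have hq0 : (0:ℝ) < q := lt_of_lt_of_le one_pos hq
  have hpa : (0:ℝ) < p^2 + a := by positivity
  have hA : (2*q*p + p^2) * a ≤ 4*q^2*(p^2+a) := by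
    nlinarith [mul_nonneg ha (sq_nonneg (p - q)),
      mul_le_mul_of_nonneg_left haq (sq_nonneg p), sq_nonneg (p*q)]
  have hD : (2*q*p + p^2) * w^2 ≤ 4*q^2*y^2 := by
    have h1 : (2*q*p + p^2) * (w^2*(p^2+a)) ≤ (2*q*p+p^2) * (a*y^2) :=
      mul_le_mul_of_nonneg_left hUY (by positivity)
    have h2 : (2*q*p+p^2)*(a*y^2) ≤ 4*q^2*(p^2+a)*y^2 := by
      nlinarith [mul_le_mul_of_nonneg_right hA (sq_nonneg y)]
    have h3 : (2*q*p + p^2) * w^2 * (p^2+a) ≤ 4*q^2*y^2*(p^2+a) := by nlinarith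
    exact le_of_mul_le_mul_right h3 hpa
  have hfin : 2*q*(p * w^2 + 2 * p * w * x) ≤ 2*q*(2 * q * (x^2 + y^2)) := by
    nlinarith [sq_nonneg (2*q*x - p*w), hD]
  exact le_of_mul_le_mul_left hfin (by positivity)

/-- Real-number version of the key inequality. -/
lemma ht_key_real (t σ a U X Y : ℝ) (ht : 0 < t) (ha : 1 ≤ a) (haσ : a ≤ σ)
    (hU : 0 ≤ U) (hX : 0 ≤ X) (hY : 0 ≤ Y)
    (hUY : U * (t + a) ≤ a * Y) :
    U + 2 * Real.sqrt U * Real.sqrt X ≤ 2 * Real.sqrt σ / Real.sqrt t * (X + Y) := by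
  have hσ : (0:ℝ) ≤ σ := le_trans (by linarith) haσ
  set p := Real.sqrt t with hpdef
  set q := Real.sqrt σ with hqdef
  set w := Real.sqrt U with hwdef
  set x := Real.sqrt X with hxdef
  set y := Real.sqrt Y with hydef
  have hp : 0 < p := Real.sqrt_pos.mpr ht
  have hp2 : p^2 = t := Real.sq_sqrt ht.le
  have hq2 : q^2 = σ := Real.sq_sqrt hσ
  have hw2 : w^2 = U := Real.sq_sqrt hU
  have hx2 : x^2 = X := Real.sq_sqrt hX
  have hy2 : y^2 = Y := Real.sq_sqrt hY
  have hq0 : 0 ≤ q := Real.sqrt_nonneg σ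
  have hq : 1 ≤ q := by nlinarith
  have key := ht_poly_aux p q a w x y hp hq (Real.sqrt_nonneg U) (Real.sqrt_nonneg X)
    (Real.sqrt_nonneg Y) (by linarith) (by rw [hq2]; exact haσ)
    (by rw [hw2, hp2, hy2]; exact hUY)
  rw [div_mul_eq_mul_div, le_div_iff₀ hp, ← hw2, ← hx2, ← hy2]
  nlinarith [key]

/-- Hard-thresholding contraction inequality (Li et al. 2016, Lemma 3.3):
for `s*`-sparse `θ*` and `s > s*`, the vector `θ = H_s(θ̃)` satisfies
`‖θ - θ*‖² ≤ (1 + 2√s*/√(s - s*))·‖θ̃ - θ*‖²`. -/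
theorem stmt_5 {d : ℕ} (s sstar : ℕ) (hs : sstar < s)
    (θstar θtil : EuclideanSpace ℝ (Fin d))
    (hsparse : (Finset.univ.filter (fun i => θstar i ≠ 0)).card ≤ sstar)
    (Ω : Finset (Fin d)) (hcard : Ω.card = min s d)
    (htop : ∀ i ∈ Ω, ∀ j ∉ Ω, |θtil j| ≤ |θtil i|)
    (θ : EuclideanSpace ℝ (Fin d))
    (hH : ∀ i, θ i = if i ∈ Ω then θtil i else 0) :
    ‖θ - θstar‖ ^ 2 ≤
      (1 + 2 * Real.sqrt sstar / Real.sqrt (s - sstar)) * ‖θtil - θstar‖ ^ 2 := by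
  classical
  have hnorm : ∀ v : EuclideanSpace ℝ (Fin d), ‖v‖^2 = ∑ i, (v i)^2 := by
    intro v
    rw [EuclideanSpace.norm_eq, Real.sq_sqrt (Finset.sum_nonneg fun i _ => sq_nonneg _)]
    simp [Real.norm_eq_abs, sq_abs]
  have hsubapp : ∀ (u v : EuclideanSpace ℝ (Fin d)) (i : Fin d), (u - v) i = u i - v i :=
    fun u v i => rfl
  rw [hnorm, hnorm]
  simp only [hsubapp]
  set c : ℝ := 2 * Real.sqrt sstar / Real.sqrt ((s:ℝ) - (sstar:ℝ)) with hcdef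
  have hc0 : 0 ≤ c := by positivity
  set T : ℝ := ∑ i, (θtil i - θstar i)^2 with hTdef
  have hT0 : 0 ≤ T := Finset.sum_nonneg fun i _ => sq_nonneg _
  set S : Finset (Fin d) := Finset.univ.filter (fun i => θstar i ≠ 0) with hSdef
  set A : Finset (Fin d) := S \ Ω with hAdef
  set B : Finset (Fin d) := Ω \ S with hBdef
  have hnotS : ∀ i, i ∉ S → θstar i = 0 := by
    intro i hi
    by_contra h
    exact hi (Finset.mem_filter.mpr ⟨Finset.mem_univ _, h⟩)
  -- split the sums over Ω and its complement
  have hsplit1 : ∑ i, (θ i - θstar i)^2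
      = ∑ i ∈ Ω, (θtil i - θstar i)^2 + ∑ i ∈ Ωᶜ, (θstar i)^2 := by
    rw [← Finset.sum_add_sum_compl Ω (fun i => (θ i - θstar i)^2)]
    congr 1
    · exact Finset.sum_congr rfl fun i hi => by rw [hH i, if_pos hi]
    · refine Finset.sum_congr rfl fun i hi => ?_
      rw [hH i, if_neg (by simpa using hi)]
      ring
  have hsplit2 : T = ∑ i ∈ Ω, (θtil i - θstar i)^2 + ∑ i ∈ Ωᶜ, (θtil i - θstar i)^2 :=
    (Finset.sum_add_sum_compl Ω _).symm
  -- the main inequality on the complement of Ω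
  have hAsub : A ⊆ Ωᶜ := by
    intro i hi
    simp only [hAdef, Finset.mem_sdiff] at hi
    simpa using hi.2
  have h1 : ∑ i ∈ Ωᶜ, (θstar i)^2 = ∑ i ∈ A, (θstar i)^2 := by
    refine (Finset.sum_subset hAsub fun i hi hiA => ?_).symm
    have hiΩ : i ∉ Ω := by simpa using hi
    have hiS : i ∉ S := fun hiS => hiA (Finset.mem_sdiff.mpr ⟨hiS, hiΩ⟩)
    rw [hnotS i hiS]
    ring
  have h2 : ∑ i ∈ A, (θtil i - θstar i)^2 ≤ ∑ i ∈ Ωᶜ, (θtil i - θstar i)^2 :=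
    Finset.sum_le_sum_of_subset_of_nonneg hAsub fun i _ _ => sq_nonneg _
  have MAIN : ∑ i ∈ A, (θstar i)^2 ≤ ∑ i ∈ A, (θtil i - θstar i)^2 + c * T := by
    rcases A.eq_empty_or_nonempty with hA0 | ⟨i₀, hi₀⟩
    · rw [hA0]
      simp
      positivity
    · have hi₀Ω : i₀ ∉ Ω := (Finset.mem_sdiff.mp hi₀).2
      have hΩs : Ω.card = s := by
        rcases le_or_gt s d with h | h
        · rw [hcard, min_eq_left h]
        · exfalso
          have : Ω = Finset.univ := by
            apply Finset.eq_univ_of_card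
            rw [hcard, min_eq_right h.le, Fintype.card_fin]
          exact hi₀Ω (this ▸ Finset.mem_univ i₀)
      have e1 : B.card + (Ω ∩ S).card = s := by
        rw [← hΩs]; exact Finset.card_sdiff_add_card_inter Ω S
      have e2 : A.card + (S ∩ Ω).card = S.card := Finset.card_sdiff_add_card_inter S Ω
      have e3 : S.card ≤ sstar := hsparse
      have e4 : (Ω ∩ S).card = (S ∩ Ω).card := by rw [Finset.inter_comm]
      have hBcard : s - sstar + A.card ≤ B.card := by omega
      have haA : A.card ≤ sstar := by omega
      have h1A : 1 ≤ A.card := Finset.card_pos.mpr ⟨i₀, hi₀⟩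
      set U : ℝ := ∑ i ∈ A, (θtil i)^2 with hUdef
      set X : ℝ := ∑ i ∈ A, (θtil i - θstar i)^2 with hXdef
      set Y : ℝ := ∑ j ∈ B, (θtil j - θstar j)^2 with hYdef
      have hU0 : 0 ≤ U := Finset.sum_nonneg fun i _ => sq_nonneg _
      have hX0 : 0 ≤ X := Finset.sum_nonneg fun i _ => sq_nonneg _
      have hY0 : 0 ≤ Y := Finset.sum_nonneg fun i _ => sq_nonneg _
      have hθB : ∀ j ∈ B, θstar j = 0 := fun j hj => hnotS j (Finset.mem_sdiff.mp hj).2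
      have hYeq : ∑ j ∈ B, (θtil j)^2 = Y :=
        Finset.sum_congr rfl fun j hj => by rw [hYdef] at *; rw [hθB j hj]; ring
      have hpt : ∀ i ∈ A, (θtil i)^2 * B.card ≤ ∑ j ∈ B, (θtil j)^2 := by
        intro i hi
        have hiΩ : i ∉ Ω := (Finset.mem_sdiff.mp hi).2
        calc (θtil i)^2 * B.card = ∑ _j ∈ B, (θtil i)^2 := by
              rw [Finset.sum_const, nsmul_eq_mul, mul_comm]
          _ ≤ ∑ j ∈ B, (θtil j)^2 := by
              refine Finset.sum_le_sum fun j hj => ?_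
              have hjΩ : j ∈ Ω := (Finset.mem_sdiff.mp hj).1
              have habs := htop j hjΩ i hiΩ
              calc (θtil i)^2 = |θtil i|^2 := (sq_abs _).symm
                _ ≤ |θtil j|^2 := by nlinarith [abs_nonneg (θtil i)]
                _ = (θtil j)^2 := sq_abs _
      have hUB : U * B.card ≤ A.card * Y := by
        calc U * B.card = ∑ i ∈ A, (θtil i)^2 * B.card := by rw [Finset.sum_mul]
          _ ≤ ∑ _i ∈ A, ∑ j ∈ B, (θtil j)^2 := Finset.sum_le_sum hpt
          _ = A.card * ∑ j ∈ B, (θtil j)^2 := by rw [Finset.sum_const, nsmul_eq_mul]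
          _ = A.card * Y := by rw [hYeq]
      have hcastB : ((s:ℝ) - sstar + A.card) ≤ (B.card : ℝ) := by
        have h : ((s - sstar + A.card : ℕ) : ℝ) ≤ (B.card : ℝ) := Nat.cast_le.mpr hBcard
        rwa [Nat.cast_add, Nat.cast_sub hs.le] at h
      have hUcast : U * (((s:ℝ) - sstar) + A.card) ≤ (A.card : ℝ) * Y :=
        le_trans (mul_le_mul_of_nonneg_left hcastB hU0) hUB
      have hCS : ∑ i ∈ A, |θtil i| * |θtil i - θstar i| ≤ Real.sqrt U * Real.sqrt X := by
        have h := Finset.sum_mul_sq_le_sq_mul_sq A (fun i => |θtil i|)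
          (fun i => |θtil i - θstar i|)
        simp only [sq_abs] at h
        have h0 : 0 ≤ ∑ i ∈ A, |θtil i| * |θtil i - θstar i| :=
          Finset.sum_nonneg fun i _ => mul_nonneg (abs_nonneg _) (abs_nonneg _)
        calc ∑ i ∈ A, |θtil i| * |θtil i - θstar i|
            = Real.sqrt ((∑ i ∈ A, |θtil i| * |θtil i - θstar i|)^2) :=
              (Real.sqrt_sq h0).symm
          _ ≤ Real.sqrt (U * X) := Real.sqrt_le_sqrt h
          _ = Real.sqrt U * Real.sqrt X := Real.sqrt_mul hU0 X
      have hAbound : ∑ i ∈ A, (θstar i)^2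
          ≤ X + U + 2 * ∑ i ∈ A, |θtil i| * |θtil i - θstar i| := by
        have hpw : ∀ i ∈ A, (θstar i)^2
            ≤ (θtil i - θstar i)^2 + (θtil i)^2 + 2 * (|θtil i| * |θtil i - θstar i|) := by
          intro i _
          have habs : -(θtil i * (θtil i - θstar i)) ≤ |θtil i| * |θtil i - θstar i| := by
            rw [← abs_mul]
            exact neg_le_abs _
          nlinarith [habs]
        calc ∑ i ∈ A, (θstar i)^2
            ≤ ∑ i ∈ A, ((θtil i - θstar i)^2 + (θtil i)^2 + 2 * (|θtil i| * |θtil i - θstar i|)) :=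
              Finset.sum_le_sum hpw
          _ = X + U + 2 * ∑ i ∈ A, |θtil i| * |θtil i - θstar i| := by
              rw [Finset.sum_add_distrib, Finset.sum_add_distrib, ← Finset.mul_sum]
      have hkey := ht_key_real ((s:ℝ) - sstar) (sstar:ℝ) (A.card:ℝ) U X Y
        (by have : (sstar:ℝ) < s := Nat.cast_lt.mpr hs; linarith)
        (by exact_mod_cast h1A) (by exact_mod_cast haA) hU0 hX0 hY0 hUcast
      have hdisj : Disjoint A B := by
        rw [Finset.disjoint_left]
        intro i hiA hiB
        exact (Finset.mem_sdiff.mp hiA).2 (Finset.mem_sdiff.mp hiB).1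
      have hXY : X + Y ≤ T := by
        rw [hXdef, hYdef, ← Finset.sum_union hdisj, hTdef]
        exact Finset.sum_le_sum_of_subset_of_nonneg (Finset.subset_univ _)
          fun i _ _ => sq_nonneg _
      have hcXY : c * (X + Y) ≤ c * T := mul_le_mul_of_nonneg_left hXY hc0
      have hkey' : U + 2 * Real.sqrt U * Real.sqrt X ≤ c * (X + Y) := hkey
      linarith [hCS, hAbound, hkey', hcXY]
  rw [hsplit1]
  have hfin : ∑ i ∈ Ωᶜ, (θstar i)^2 ≤ ∑ i ∈ Ωᶜ, (θtil i - θstar i)^2 + c * T := by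
    rw [h1]; linarith [MAIN, h2]
  have hgoal : (1 + c) * T = T + c * T := by ring
  linarith [hsplit2, hfin]
end
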